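/- arXiv:2006.09166 — 2 statements merged into one kernel-verified Lean document; each statement's English description precedes it below -/
import Mathlib

section
/- Every infinite, locally finite, connected, claw-free graph that contains a cycle also contains an induced subgraph isomorphic to the paw. -/
open SimpleGraph

/-- The claw `K_{1,3}`: vertex `0` is the centre, adjacent to `1`, `2`, `3`. -/
def claw : SimpleGraph (Fin 4) := SimpleGraph.fromRel (fun a _ => a = 0)

/-- The paw: a triangle on `1, 2, 3` with pendant vertex `0` attached to `1`. -/
def paw : SimpleGraph (Fin 4) :=
  SimpleGraph.fromRel (fun a b => (a = 0 ∧ b = 1) ∨ (a ≠ 0 ∧ b ≠ 0))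

/-- `G` is `H`-free: no induced subgraph of `G` is isomorphic to `H`.
(`H ↪g G` is a graph embedding, i.e. an isomorphism onto an induced subgraph.) -/
def HFree {W V : Type*} (H : SimpleGraph W) (G : SimpleGraph V) : Prop :=
  ¬ Nonempty (H ↪g G)

/-- `G` is 2-connected: at least 3 vertices, connected, and deleting any vertex
leaves it connected. -/
def TwoConnected {V : Type*} (G : SimpleGraph V) : Prop :=
  (∃ a b c : V, a ≠ b ∧ a ≠ c ∧ b ≠ c) ∧ G.Connected ∧
    ∀ v : V, (G.induce {u | u ≠ v}).Connected

/-- The hypothesis that every induced paw of `G`, with pendant vertex `a₁` adjacent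
precisely to the triangle vertex `a₀`, satisfies `φ(a₁,b₁)` or `φ(a₁,b₂)`:
`a₁` has a common neighbour outside the paw with `b₁` or with `b₂`. -/
def PawCondition {V : Type*} (G : SimpleGraph V) : Prop :=
  ∀ a₁ a₀ b₁ b₂ : V,
    G.Adj a₁ a₀ → G.Adj a₀ b₁ → G.Adj a₀ b₂ → G.Adj b₁ b₂ →
    ¬ G.Adj a₁ b₁ → ¬ G.Adj a₁ b₂ → a₁ ≠ b₁ → a₁ ≠ b₂ →
    ∃ x, x ∉ ({a₁, a₀, b₁, b₂} : Set V) ∧ G.Adj x a₁ ∧ (G.Adj x b₁ ∨ G.Adj x b₂)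

/-- A ray (one-way infinite path) in `G`, given by its sequence of vertices. -/
def IsRay {V : Type*} (G : SimpleGraph V) (f : ℕ → V) : Prop :=
  Function.Injective f ∧ ∀ n, G.Adj (f n) (f (n + 1))

/-- Two rays are equivalent (belong to the same end) if no finite vertex set
separates them. -/
def EndEquiv {V : Type*} (G : SimpleGraph V) (f g : ℕ → V) : Prop :=
  ∀ S : Set V, S.Finite →
    ∃ (m n : ℕ) (p : G.Walk (f m) (g n)), ∀ x ∈ p.support, x ∉ S

/-- The ends of `G`, as equivalence classes of rays. -/
def Ends {V : Type*} (G : SimpleGraph V) : Type _ :=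
  Quot (fun f g : {f : ℕ → V // IsRay G f} => EndEquiv G f.1 g.1)

/-- The edge cut `δ(X)`. -/
def edgeCut {V : Type*} (G : SimpleGraph V) (X : Set V) : Set (Sym2 V) :=
  {e | e ∈ G.edgeSet ∧ ∃ a b, e = s(a, b) ∧ a ∈ X ∧ b ∉ X}

/-- `G` has a Hamilton circle in its Freudenthal compactification `|G|`,
expressed combinatorially: there is a spanning edge set `C` in which every
vertex has degree exactly `2` and which meets every finite cut of `G` in a
positive even number of edges (for locally finite connected `G` this
characterises edge sets whose closure in `|G|` is a circle through all
vertices). -/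
def HasHamiltonCircle {V : Type*} (G : SimpleGraph V) : Prop :=
  ∃ C ⊆ G.edgeSet, (∀ v : V, {e ∈ C | v ∈ e}.ncard = 2) ∧
    ∀ X : Set V, X.Nonempty → Xᶜ.Nonempty → (edgeCut G X).Finite →
      (C ∩ edgeCut G X).Nonempty ∧ Even ((C ∩ edgeCut G X).ncard)

/-- The end represented by the ray `g` lies in the closure (in `|G|`) of the
vertex set `M`: for every finite `S`, the component of `G - S` containing a
tail of `g` meets `M`. -/
def EndInClosure {V : Type*} (G : SimpleGraph V) (g : ℕ → V) (M : Set V) : Prop :=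
  ∀ S : Set V, S.Finite → ∃ u ∈ M, ∃ N : ℕ, ∀ n ≥ N,
    ∃ p : G.Walk u (g n), ∀ x ∈ p.support, x ∉ S

/-- `S` is a vertex separator of `G`: `G - S` is disconnected. -/
def IsSeparator {V : Type*} (G : SimpleGraph V) (S : Set V) : Prop :=
  ∃ (u : V) (hu : u ∉ S) (v : V) (hv : v ∉ S),
    ¬ (G.induce {x | x ∉ S}).Reachable ⟨u, hu⟩ ⟨v, hv⟩

/-- `S` is a minimal vertex separator of `G`. -/
def IsMinSeparator {V : Type*} (G : SimpleGraph V) (S : Set V) : Prop :=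
  IsSeparator G S ∧ ∀ T ⊂ S, ¬ IsSeparator G T

/-- The `k`-blow-up of `G`: each vertex is replaced by a `k`-clique. -/
def blowup {V : Type*} (G : SimpleGraph V) (k : ℕ) : SimpleGraph (V × Fin k) where
  Adj x y := (x.1 = y.1 ∧ x.2 ≠ y.2) ∨ G.Adj x.1 y.1
  symm := by
    refine ⟨?_⟩
    rintro x y (⟨h1, h2⟩ | h)
    · exact Or.inl ⟨h1.symm, h2.symm⟩
    · exact Or.inr h.symm
  loopless := by
    refine ⟨?_⟩
    rintro x (⟨_, h⟩ | h)
    · exact h rfl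
    · exact G.irrefl h

section Aux
variable {V : Type} {G : SimpleGraph V}

lemma paw_emb {p a b c : V} (hab : G.Adj a b) (hac : G.Adj a c) (hbc : G.Adj b c)
    (hpa : G.Adj p a) (hpb : ¬G.Adj p b) (hpc : ¬G.Adj p c) (hpb' : p ≠ b) (hpc' : p ≠ c) :
    Nonempty (paw ↪g G) := by
  have hpa' : p ≠ a := hpa.ne
  have hbp : ¬G.Adj b p := fun h => hpb h.symm
  have hcp : ¬G.Adj c p := fun h => hpc h.symm
  refine ⟨⟨⟨![p,a,b,c], ?_⟩, ?_⟩⟩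
  · intro i j hij
    fin_cases i <;> fin_cases j <;>
      simp_all [hab.ne, hac.ne, hbc.ne, hab.ne', hac.ne', hbc.ne'] <;> rfl
  · intro i j
    fin_cases i <;> fin_cases j <;>
      simp [paw, SimpleGraph.fromRel_adj, hab, hac, hbc, hab.symm, hac.symm, hbc.symm,
        hpa, hpa.symm, hpb, hpc, hbp, hcp,
        hpa', hpb', hpc', hab.ne, hac.ne, hbc.ne] <;> first | decide | assumption | (rw [G.adj_comm]; assumption)

lemma claw_emb {u x y z : V} (hx : G.Adj u x) (hy : G.Adj u y) (hz : G.Adj u z)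
    (hxy : ¬G.Adj x y) (hxz : ¬G.Adj x z) (hyz : ¬G.Adj y z)
    (hxy' : x ≠ y) (hxz' : x ≠ z) (hyz' : y ≠ z) :
    Nonempty (claw ↪g G) := by
  have hyx : ¬G.Adj y x := fun h => hxy h.symm
  have hzx : ¬G.Adj z x := fun h => hxz h.symm
  have hzy : ¬G.Adj z y := fun h => hyz h.symm
  refine ⟨⟨⟨![u,x,y,z], ?_⟩, ?_⟩⟩
  · intro i j hij
    fin_cases i <;> fin_cases j <;>
      simp_all [hx.ne, hy.ne, hz.ne, hx.ne', hy.ne', hz.ne'] <;> rfl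
  · intro i j
    fin_cases i <;> fin_cases j <;>
      simp [claw, SimpleGraph.fromRel_adj, hx, hy, hz, hx.symm, hy.symm, hz.symm,
        hxy, hxz, hyz, hyx, hzx, hzy, hxy', hxz', hyz', hx.ne, hy.ne, hz.ne] <;> first | decide | assumption | (rw [G.adj_comm]; assumption)

lemma cycle_two_nbrs {u : V} (q : G.Walk u u) (hq : q.IsCycle) :
    ∃ b c, b ≠ c ∧ G.Adj u b ∧ G.Adj u c ∧ b ∈ q.support.tail ∧ c ∈ q.support.tail := by
  have hnil : ¬ q.Nil := by
    intro h
    exact Walk.IsCycle.not_of_nil (h.eq_nil ▸ hq)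
  obtain ⟨b, hb, r, rfl⟩ := Walk.not_nil_iff.mp hnil
  have hrev : ¬ r.reverse.Nil := Walk.not_nil_of_ne hb.ne
  obtain ⟨c, hc, r2, hr2⟩ := Walk.not_nil_iff.mp hrev
  have hcr : c ∈ r.support := by
    have : c ∈ r.reverse.support := by rw [hr2]; simp
    rwa [Walk.support_reverse, List.mem_reverse] at this
  refine ⟨b, c, ?_, hb, hc, by simp, by simp [hcr]⟩
  rintro rfl
  have hnodup := hq.edges_nodup
  have h1 : s(u, b) ∈ r.edges := by
    have : s(u, b) ∈ r.reverse.edges := by rw [hr2]; simp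
    rwa [Walk.edges_reverse, List.mem_reverse] at this
  simp only [Walk.edges_cons, List.nodup_cons] at hnodup
  exact hnodup.1 h1

end Aux

/-- every infinite, locally finite, connected, claw-free graph containing
a cycle contains an induced paw. -/
theorem stmt_4 {V : Type} [Infinite V] (G : SimpleGraph V)
    (hlf : ∀ v : V, (G.neighborSet v).Finite) (hconn : G.Connected)
    (hclaw : HFree claw G) (hcyc : ∃ (a : V) (p : G.Walk a a), p.IsCycle) :
    Nonempty (paw ↪g G) := by
  classical
  by_cases htri : ∃ a b c, G.Adj a b ∧ G.Adj a c ∧ G.Adj b c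
  · obtain ⟨a, b, c, hab, hac, hbc⟩ := htri
    by_contra hpaw
    have key : ∀ x u v w : V, G.Adj u v → G.Adj u w → G.Adj v w → G.Adj x u →
        x ≠ v → x ≠ w → G.Adj x v ∨ G.Adj x w := by
      intro x u v w huv huw hvw hxu hxv hxw
      by_contra h
      push_neg at h
      exact hpaw (paw_emb huv huw hvw hxu h.1 h.2 hxv hxw)
    set T : Set V := ({a, b, c} : Set V) ∪ G.neighborSet a ∪ G.neighborSet b ∪ G.neighborSet c
      with hTdef
    have hT : T.Finite := by
      refine (((Set.toFinite _).union (hlf a)).union (hlf b)).union (hlf c)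
    obtain ⟨w, hw⟩ := hT.infinite_compl.nonempty
    obtain ⟨q⟩ := hconn.preconnected a w
    have ha : a ∈ T := by simp [hTdef]
    -- find a crossing edge
    have cross : ∀ (s t : V) (q : G.Walk s t), s ∈ T → t ∉ T →
        ∃ x d, G.Adj x d ∧ x ∈ T ∧ d ∉ T := by
      intro s t q
      induction q with
      | nil => intro hs ht; exact absurd hs ht
      | @cons u m _ h r ih =>
        intro hs ht
        by_cases hm : m ∈ T
        · exact ih hm ht
        · exact ⟨u, m, h, hs, hm⟩
    obtain ⟨x, d, hxd, hxT, hdT⟩ := cross a w q ha hw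
    -- d is not adjacent to a, b, c and differs from them
    have hdmem : ∀ u : V, u ∈ ({a,b,c} : Set V) → d ≠ u ∧ ¬ G.Adj u d := by
      intro u hu
      constructor
      · rintro rfl
        exact hdT (Or.inl (Or.inl (Or.inl hu)))
      · intro h
        rcases hu with rfl | rfl | rfl
        · exact hdT (Or.inl (Or.inl (Or.inr h)))
        · exact hdT (Or.inl (Or.inr h))
        · exact hdT (Or.inr h)
    -- x is not a, b, c
    have hxabc : x ∉ ({a,b,c} : Set V) := by
      rintro (rfl | rfl | rfl)
      · exact hdT (Or.inl (Or.inl (Or.inr hxd)))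
      · exact hdT (Or.inl (Or.inr hxd))
      · exact hdT (Or.inr hxd)
    have final : ∀ u v : V, u ∈ ({a,b,c} : Set V) → v ∈ ({a,b,c} : Set V) →
        G.Adj x u → G.Adj x v → G.Adj u v → False := by
      intro u v hu hv hxu hxv huv
      obtain ⟨hdu, hud⟩ := hdmem u hu
      obtain ⟨hdv, hvd⟩ := hdmem v hv
      rcases key d x u v hxu hxv huv hxd.symm hdu hdv with h | h
      · exact hud h.symm
      · exact hvd h.symm
    have hxa' : x ≠ a := fun h => hxabc (by simp [h])
    have hxb' : x ≠ b := fun h => hxabc (by simp [h])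
    have hxc' : x ≠ c := fun h => hxabc (by simp [h])
    -- x is adjacent to one of a, b, c
    rcases hxT with ((hx | hx) | hx) | hx
    · exact absurd hx hxabc
    · -- x adj a
      have hxa : G.Adj x a := hx.symm
      rcases key x a b c hab hac hbc hxa hxb' hxc' with h | h
      · exact absurd (final a b (by simp) (by simp) hxa h hab) not_false
      · exact absurd (final a c (by simp) (by simp) hxa h hac) not_false
    · have hxb : G.Adj x b := hx.symm
      rcases key x b a c hab.symm hbc hac hxb hxa' hxc' with h | h
      · exact absurd (final b a (by simp) (by simp) hxb h hab.symm) not_false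
      · exact absurd (final b c (by simp) (by simp) hxb h hbc) not_false
    · have hxc : G.Adj x c := hx.symm
      rcases key x c a b hac.symm hbc.symm hab hxc hxa' hxb' with h | h
      · exact absurd (final c a (by simp) (by simp) hxc h hac.symm) not_false
      · exact absurd (final c b (by simp) (by simp) hxc h hbc.symm) not_false
  · -- triangle-free: contradiction with infiniteness
    exfalso
    push_neg at htri
    have deg2 : ∀ u x y z : V, G.Adj u x → G.Adj u y → G.Adj u z →
        x ≠ y → x ≠ z → y ≠ z → False := by
      intro u x y z hx hy hz hxy hxz hyz
      have nxy : ¬ G.Adj x y := fun h => htri u x y hx hy h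
      have nxz : ¬ G.Adj x z := fun h => htri u x z hx hz h
      have nyz : ¬ G.Adj y z := fun h => htri u y z hy hz h
      exact hclaw (claw_emb hx hy hz nxy nxz nyz hxy hxz hyz)
    obtain ⟨a0, p, hp⟩ := hcyc
    have closure : ∀ u, u ∈ p.support → ∀ w, G.Adj u w → w ∈ p.support := by
      intro u hu w hw
      obtain ⟨b, c, hbc, hub, huc, hbs, hcs⟩ := cycle_two_nbrs (p.rotate u hu) (hp.rotate hu)
      have hrot := Walk.support_rotate p u hu
      have hbp : b ∈ p.support := by
        rw [Walk.support_eq_cons]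
        exact List.mem_cons_of_mem _ (hrot.mem_iff.mp hbs)
      have hcp : c ∈ p.support := by
        rw [Walk.support_eq_cons]
        exact List.mem_cons_of_mem _ (hrot.mem_iff.mp hcs)
      by_cases h1 : w = b
      · exact h1 ▸ hbp
      by_cases h2 : w = c
      · exact h2 ▸ hcp
      exact absurd (deg2 u b c w hub huc hw hbc (fun h => h1 h.symm) (fun h => h2 h.symm))
        not_false
    have all : ∀ w : V, w ∈ p.support := by
      intro w
      obtain ⟨q⟩ := hconn.preconnected a0 w
      have H : ∀ (s t : V) (q : G.Walk s t), s ∈ p.support → t ∈ p.support := by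
        intro s t q
        induction q with
        | nil => exact id
        | cons h r ih => intro hs; exact ih (closure _ hs _ h)
      exact H a0 w q p.start_mem_support
    have : Finite V := by
      have : (Set.univ : Set V).Finite := by
        apply Set.Finite.subset (List.finite_toSet p.support)
        intro w _; exact all w
      exact Set.finite_univ_iff.mp this
    exact not_finite V
end

section
/- There is no infinite, locally finite, 2-connected graph that is both claw-free and paw-free. -/
open SimpleGraph

lemma paw_embed {V : Type} (G : SimpleGraph V) (a₁ a₀ b₁ b₂ : V)
    (h10 : G.Adj a₁ a₀) (h01 : G.Adj a₀ b₁) (h02 : G.Adj a₀ b₂) (h12 : G.Adj b₁ b₂)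
    (n1 : ¬ G.Adj a₁ b₁) (n2 : ¬ G.Adj a₁ b₂) (e1 : a₁ ≠ b₁) (e2 : a₁ ≠ b₂) :
    Nonempty (paw ↪g G) := by
  have ne10 := h10.ne
  have ne01 := h01.ne
  have ne02 := h02.ne
  have ne12 := h12.ne
  refine ⟨⟨⟨![a₁, a₀, b₁, b₂], ?_⟩, ?_⟩⟩
  · intro i j hij
    fin_cases i <;> fin_cases j <;> simp_all
  · intro i j
    change G.Adj (![a₁, a₀, b₁, b₂] i) (![a₁, a₀, b₁, b₂] j) ↔ paw.Adj i j
    fin_cases i <;> fin_cases j <;>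
      simp_all [paw, SimpleGraph.fromRel_adj, G.adj_comm, adj_comm]

lemma claw_embed {V : Type} (G : SimpleGraph V) (c x y z : V)
    (hx : G.Adj c x) (hy : G.Adj c y) (hz : G.Adj c z)
    (nxy : ¬ G.Adj x y) (nxz : ¬ G.Adj x z) (nyz : ¬ G.Adj y z)
    (exy : x ≠ y) (exz : x ≠ z) (eyz : y ≠ z) :
    Nonempty (claw ↪g G) := by
  have ncx := hx.ne
  have ncy := hy.ne
  have ncz := hz.ne
  refine ⟨⟨⟨![c, x, y, z], ?_⟩, ?_⟩⟩
  · intro i j hij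
    fin_cases i <;> fin_cases j <;> simp_all
  · intro i j
    change G.Adj (![c, x, y, z] i) (![c, x, y, z] j) ↔ claw.Adj i j
    fin_cases i <;> fin_cases j <;>
      simp_all [claw, SimpleGraph.fromRel_adj, G.adj_comm, adj_comm]

lemma walk_closed {V : Type} {G : SimpleGraph V} {S : Set V}
    (hcl : ∀ s ∈ S, ∀ t, G.Adj s t → t ∈ S) :
    ∀ {a b : V}, G.Walk a b → a ∈ S → b ∈ S := by
  intro a b w
  induction w with
  | nil => exact id
  | cons h q ih => exact fun ha => ih (hcl _ ha _ h)

lemma first_step {V : Type} {G : SimpleGraph V} {a b : V} (w : G.Walk a b) (hab : a ≠ b) :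
    ∃ u, G.Adj a u ∧ u ∈ w.support := by
  cases w with
  | nil => exact absurd rfl hab
  | cons h q => exact ⟨_, h, by simp [Walk.start_mem_support]⟩

lemma path_interior {V : Type} {G : SimpleGraph V} :
    ∀ {a b : V} (w : G.Walk a b), w.IsPath → ∀ s ∈ w.support, s ≠ a → s ≠ b →
      ∃ n₁ n₂, n₁ ≠ n₂ ∧ G.Adj s n₁ ∧ G.Adj s n₂ ∧ n₁ ∈ w.support ∧ n₂ ∈ w.support := by
  intro a b w
  induction w with
  | nil => simp
  | @cons a u b h q ih =>
    intro hp s hs hsa hsb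
    have hq : q.IsPath := ((Walk.cons_isPath_iff _ _).1 hp).1
    have hanq : a ∉ q.support := ((Walk.cons_isPath_iff _ _).1 hp).2
    have hsq : s ∈ q.support := by
      rcases (Walk.mem_support_iff _).1 hs with h' | h'
      · exact absurd h' hsa
      · exact h'
    by_cases hsu : s = u
    · subst hsu
      obtain ⟨u2, hu2, hu2m⟩ := first_step q hsb
      refine ⟨a, u2, fun e => hanq (e ▸ hu2m), h.symm, hu2, by simp, by simp [hu2m]⟩
    · obtain ⟨n₁, n₂, hne, ha1, ha2, hm1, hm2⟩ := ih hq s hsq hsu hsb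
      exact ⟨n₁, n₂, hne, ha1, ha2, by simp [hm1], by simp [hm2]⟩


/-- there is no infinite, locally finite, 2-connected graph that is both
claw-free and paw-free. -/
theorem stmt_5 {V : Type} [Infinite V] (G : SimpleGraph V)
    (hlf : ∀ v : V, (G.neighborSet v).Finite) (h2 : TwoConnected G)
    (hclaw : HFree claw G) (hpaw : HFree paw G) : False := by
  classical
  obtain ⟨⟨a, b, c, hab, hac, hbc⟩, hconn, hcut⟩ := h2
  have hpawc : ∀ a₁ a₀ b₁ b₂ : V, G.Adj a₁ a₀ → G.Adj a₀ b₁ → G.Adj a₀ b₂ →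
      G.Adj b₁ b₂ → ¬ G.Adj a₁ b₁ → ¬ G.Adj a₁ b₂ → a₁ ≠ b₁ → a₁ ≠ b₂ → False :=
    fun a₁ a₀ b₁ b₂ h1 h2' h3 h4 h5 h6 h7 h8 =>
      hpaw (paw_embed G a₁ a₀ b₁ b₂ h1 h2' h3 h4 h5 h6 h7 h8)
  have final : ∀ S : Set V, S.Finite → (∃ s, s ∈ S) →
      (∀ s ∈ S, ∀ t, G.Adj s t → t ∈ S) → False := by
    rintro S hfin ⟨s0, hs0⟩ hcl
    have hall : ∀ z : V, z ∈ S := by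
      intro z
      obtain ⟨w⟩ := hconn.preconnected s0 z
      exact walk_closed hcl w hs0
    exact Set.infinite_univ (hfin.subset fun z _ => hall z)
  by_cases htri : ∃ x y z : V, G.Adj x y ∧ G.Adj x z ∧ G.Adj y z
  · -- triangle case
    obtain ⟨u, p, q, hup, huq, hpq⟩ := htri
    have C1 : ∀ w, G.Adj u w → ∃ cc, G.Adj u cc ∧ G.Adj w cc := by
      intro w hw
      by_cases h1 : G.Adj w p
      · exact ⟨p, hup, h1⟩
      by_cases hq2 : G.Adj w q
      · exact ⟨q, huq, hq2⟩
      have hwp : w ≠ p := fun e => hq2 (e ▸ hpq)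
      have hwq : w ≠ q := fun e => h1 (e ▸ hpq.symm)
      exact (hpawc w u p q hw.symm hup huq hpq h1 hq2 hwp hwq).elim
    set S : Set V := {z | z = u ∨ G.Adj u z ∨ ∃ w, G.Adj u w ∧ G.Adj w z} with hS
    have hfin : S.Finite := by
      have : S ⊆ insert u (G.neighborSet u ∪ ⋃ w ∈ G.neighborSet u, G.neighborSet w) := by
        rintro z (rfl | hz | ⟨w, hw1, hw2⟩)
        · exact Set.mem_insert _ _
        · exact Set.mem_insert_of_mem _ (Or.inl hz)
        · exact Set.mem_insert_of_mem _ (Or.inr (Set.mem_biUnion hw1 hw2))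
      exact Set.Finite.subset (((hlf u).union ((hlf u).biUnion fun w _ => hlf w)).insert u) this
    refine final S hfin ⟨u, Or.inl rfl⟩ ?_
    rintro s hs t hst
    have case1 : t = u → t ∈ S := fun e => Or.inl e
    have case2 : G.Adj u t → t ∈ S := fun h => Or.inr (Or.inl h)
    rcases hs with rfl | hus | ⟨w, huw, hws⟩
    · exact case2 hst
    · exact Or.inr (Or.inr ⟨s, hus, hst⟩)
    · by_cases hsu : s = u
      · exact case2 (hsu ▸ hst)
      by_cases hus' : G.Adj u s
      · exact Or.inr (Or.inr ⟨s, hus', hst⟩)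
      obtain ⟨cc, hucc, hwcc⟩ := C1 w huw
      have hsc : s ≠ cc := fun e => hus' (e ▸ hucc)
      have hsu' : ¬ G.Adj s u := fun h => hus' h.symm
      have hscadj : G.Adj s cc := by
        by_contra hn
        exact hpawc s w u cc hws.symm huw.symm hwcc hucc hsu' hn hsu hsc
      by_cases htu : t = u
      · exact case1 htu
      by_cases hut : G.Adj u t
      · exact case2 hut
      by_cases htw : G.Adj t w
      · exact Or.inr (Or.inr ⟨w, huw, htw.symm⟩)
      by_cases htc : G.Adj t cc
      · exact Or.inr (Or.inr ⟨cc, hucc, htc.symm⟩)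
      have hnw : t ≠ w := fun e => htc (e ▸ hwcc)
      have hnc : t ≠ cc := fun e => htw (e ▸ hwcc.symm)
      exact (hpawc t s w cc hst.symm hws.symm hscadj hwcc htw htc hnw hnc).elim
  · -- triangle-free case
    have htf : ∀ x y z : V, G.Adj x y → G.Adj x z → G.Adj y z → False :=
      fun x y z h1 h2' h3 => htri ⟨x, y, z, h1, h2', h3⟩
    have hdeg : ∀ cv x y z : V, G.Adj cv x → G.Adj cv y → G.Adj cv z →
        x = y ∨ x = z ∨ y = z := by
      intro cv x y z hx hy hz
      by_contra hcon
      push_neg at hcon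
      obtain ⟨hxy, hxz, hyz⟩ := hcon
      exact hclaw (claw_embed G cv x y z hx hy hz
        (fun h => htf cv x y hx hy h) (fun h => htf cv x z hx hz h)
        (fun h => htf cv y z hy hz h) hxy hxz hyz)
    have hv : ∃ v x y : V, G.Adj v x ∧ G.Adj v y ∧ x ≠ y := by
      by_contra h
      push_neg at h
      have reach : ∀ {pp qq : V}, G.Reachable pp qq → pp = qq ∨ G.Adj pp qq := by
        rintro pp qq ⟨w⟩
        induction w with
        | nil => exact Or.inl rfl
        | cons h' q' ih =>
          rcases ih with rfl | hadj
          · exact Or.inr h'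
          · exact Or.inl (h _ _ _ h'.symm hadj)
      have h1 : G.Adj a b := (reach (hconn.preconnected a b)).resolve_left hab
      have h2' : G.Adj a c := (reach (hconn.preconnected a c)).resolve_left hac
      exact hbc (h a b c h1 h2')
    obtain ⟨v, x, y, hvx, hvy, hxy⟩ := hv
    have hxv : x ≠ v := hvx.ne'
    have hyv : y ≠ v := hvy.ne'
    obtain ⟨w0⟩ := (hcut v).preconnected ⟨x, hxv⟩ ⟨y, hyv⟩
    obtain ⟨p, hp, hvp⟩ : ∃ p : G.Walk x y, p.IsPath ∧ v ∉ p.support := by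
      refine ⟨((w0.map (SimpleGraph.Embedding.induce {u | u ≠ v}).toHom).copy (by rfl) (by rfl)).bypass, Walk.bypass_isPath _, fun h => ?_⟩
      have h' := Walk.support_bypass_subset _ h
      erw [Walk.support_copy, Walk.support_map] at h'
      obtain ⟨s, _, hs⟩ := List.mem_map.1 h'
      exact s.2 (by exact hs)
    set S : Set V := insert v {z | z ∈ p.support} with hSdef
    have hfin : S.Finite := (p.support.finite_toSet).insert v
    refine final S hfin ⟨v, Set.mem_insert _ _⟩ ?_
    rintro s hs t hst
    have hxm : x ∈ p.support := Walk.start_mem_support p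
    have hym : y ∈ p.support := Walk.end_mem_support p
    rcases hs with rfl | hsp
    · rcases hdeg s t x y hst hvx hvy with rfl | rfl | e
      · exact Or.inr hxm
      · exact Or.inr hym
      · exact absurd e hxy
    · by_cases hsx : s = x
      · subst hsx
        obtain ⟨u0, hxu0, hu0⟩ := first_step p hxy
        have hvu0 : v ≠ u0 := fun e => hvp (e ▸ hu0)
        rcases hdeg s t v u0 hst hvx.symm hxu0 with rfl | rfl | e
        · exact Or.inl rfl
        · exact Or.inr hu0
        · exact absurd e hvu0
      by_cases hsy : s = y
      · subst hsy
        obtain ⟨u0, hyu0, hu0r⟩ := first_step p.reverse (Ne.symm hxy)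
        have hu0 : u0 ∈ p.support := by
          rw [Walk.support_reverse] at hu0r
          exact List.mem_reverse.1 hu0r
        have hvu0 : v ≠ u0 := fun e => hvp (e ▸ hu0)
        rcases hdeg s t v u0 hst hvy.symm hyu0 with rfl | rfl | e
        · exact Or.inl rfl
        · exact Or.inr hu0
        · exact absurd e hvu0
      · obtain ⟨n₁, n₂, hne, ha1, ha2, hm1, hm2⟩ := path_interior p hp s hsp hsx hsy
        rcases hdeg s t n₁ n₂ hst ha1 ha2 with rfl | rfl | e
        · exact Or.inr hm1
        · exact Or.inr hm2
        · exact absurd e hne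
end
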